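/- Let p > 3 be a prime. Then ∑_{p-1 ≥ n₁ ≥ n₂ ≥ n₃ ≥ 1} (-1)^{n₁+n₂+n₃}/(n₁ n₂ n₃) ≡ −(4/3)·q_p(2)³ − (1/6)·B_{p-3} (mod p), where q_p(2) = (2^{p-1}−1)/p is the Fermat quotient. -/

import Mathlib

open Finset

lemma star2 (a : ℕ → ℚ) (N : ℕ) :
    2 * (∑ n₁ ∈ Icc 1 N, ∑ n₂ ∈ Icc 1 n₁, a n₁ * a n₂)
      = (∑ n ∈ Icc 1 N, a n)^2 + ∑ n ∈ Icc 1 N, (a n)^2 := by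
  induction N with
  | zero => simp
  | succ N ih =>
    have hA : ∑ n ∈ Icc 1 (N+1), a n = (∑ n ∈ Icc 1 N, a n) + a (N+1) :=
      Finset.sum_Icc_succ_top (by omega) _
    have hA2 : ∑ n ∈ Icc 1 (N+1), (a n)^2 = (∑ n ∈ Icc 1 N, (a n)^2) + (a (N+1))^2 :=
      Finset.sum_Icc_succ_top (by omega) _
    have hD : (∑ n₁ ∈ Icc 1 (N+1), ∑ n₂ ∈ Icc 1 n₁, a n₁ * a n₂)
        = (∑ n₁ ∈ Icc 1 N, ∑ n₂ ∈ Icc 1 n₁, a n₁ * a n₂)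
          + a (N+1) * ∑ n ∈ Icc 1 (N+1), a n := by
      rw [Finset.sum_Icc_succ_top (by omega), Finset.mul_sum]
    rw [hD, hA, hA2]
    linear_combination ih

lemma star3 (a : ℕ → ℚ) (N : ℕ) :
    6 * (∑ n₁ ∈ Icc 1 N, ∑ n₂ ∈ Icc 1 n₁, ∑ n₃ ∈ Icc 1 n₂, a n₁ * a n₂ * a n₃)
      = (∑ n ∈ Icc 1 N, a n)^3 + 3 * (∑ n ∈ Icc 1 N, a n) * (∑ n ∈ Icc 1 N, (a n)^2)
        + 2 * ∑ n ∈ Icc 1 N, (a n)^3 := by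
  induction N with
  | zero => simp
  | succ N ih =>
    have h2 := star2 a (N+1)
    have hA : ∑ n ∈ Icc 1 (N+1), a n = (∑ n ∈ Icc 1 N, a n) + a (N+1) :=
      Finset.sum_Icc_succ_top (by omega) _
    have hA2 : ∑ n ∈ Icc 1 (N+1), (a n)^2 = (∑ n ∈ Icc 1 N, (a n)^2) + (a (N+1))^2 :=
      Finset.sum_Icc_succ_top (by omega) _
    have hA3 : ∑ n ∈ Icc 1 (N+1), (a n)^3 = (∑ n ∈ Icc 1 N, (a n)^3) + (a (N+1))^3 :=
      Finset.sum_Icc_succ_top (by omega) _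
    have hT : (∑ n₁ ∈ Icc 1 (N+1), ∑ n₂ ∈ Icc 1 n₁, ∑ n₃ ∈ Icc 1 n₂, a n₁ * a n₂ * a n₃)
        = (∑ n₁ ∈ Icc 1 N, ∑ n₂ ∈ Icc 1 n₁, ∑ n₃ ∈ Icc 1 n₂, a n₁ * a n₂ * a n₃)
          + a (N+1) * ∑ n₂ ∈ Icc 1 (N+1), ∑ n₃ ∈ Icc 1 n₂, a n₂ * a n₃ := by
      rw [Finset.sum_Icc_succ_top (by omega)]
      congr 1
      rw [Finset.mul_sum]
      refine Finset.sum_congr rfl fun n₂ _ => ?_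
      rw [Finset.mul_sum]
      exact Finset.sum_congr rfl fun n₃ _ => by ring
    rw [hA, hA2] at h2
    rw [hT, hA, hA2, hA3]
    linear_combination ih + 3 * a (N+1) * h2

lemma split (r : ℕ) (M : ℕ) :
    ∑ n ∈ Icc 1 (2*M), ((-1:ℚ))^n / (n:ℚ)^r + ∑ n ∈ Icc 1 (2*M), 1/(n:ℚ)^r
      = 2 * ∑ k ∈ Icc 1 M, 1/((2*k : ℕ):ℚ)^r := by
  induction M with
  | zero => simp
  | succ M ih =>
    have key : 2*(M+1) = (2*M+1)+1 := by ring
    rw [key]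
    have e1 : ∑ n ∈ Icc 1 ((2*M+1)+1), ((-1:ℚ))^n / (n:ℚ)^r
        = (∑ n ∈ Icc 1 (2*M), ((-1:ℚ))^n / (n:ℚ)^r)
          + ((-1:ℚ))^(2*M+1) / ((2*M+1 : ℕ):ℚ)^r
          + ((-1:ℚ))^(2*M+1+1) / ((2*M+1+1 : ℕ):ℚ)^r := by
      rw [Finset.sum_Icc_succ_top (by omega), Finset.sum_Icc_succ_top (by omega)]
    have e2 : ∑ n ∈ Icc 1 ((2*M+1)+1), 1/(n:ℚ)^r
        = (∑ n ∈ Icc 1 (2*M), 1/(n:ℚ)^r)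
          + 1 / ((2*M+1 : ℕ):ℚ)^r + 1 / ((2*M+1+1 : ℕ):ℚ)^r := by
      rw [Finset.sum_Icc_succ_top (by omega), Finset.sum_Icc_succ_top (by omega)]
    have e3 : ∑ k ∈ Icc 1 (M+1), 1/((2*k : ℕ):ℚ)^r
        = (∑ k ∈ Icc 1 M, 1/((2*k : ℕ):ℚ)^r) + 1/((2*(M+1) : ℕ):ℚ)^r :=
      Finset.sum_Icc_succ_top (by omega) _
    have hodd : ((-1:ℚ))^(2*M+1) = -1 := by
      rw [pow_succ, pow_mul]; norm_num
    have heven : ((-1:ℚ))^(2*M+1+1) = 1 := by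
      rw [pow_succ, pow_succ, pow_mul]; norm_num
    rw [e1, e2, e3, hodd, heven]
    push_cast at ih ⊢
    linear_combination ih

variable {p : ℕ} [hp : Fact p.Prime]

lemma nadd {x y : ℚ_[p]} {C : ℝ} (hx : ‖x‖ ≤ C) (hy : ‖y‖ ≤ C) : ‖x + y‖ ≤ C :=
  le_trans (Padic.nonarchimedean x y) (max_le hx hy)

lemma nsub {x y : ℚ_[p]} {C : ℝ} (hx : ‖x‖ ≤ C) (hy : ‖y‖ ≤ C) : ‖x - y‖ ≤ C := by
  rw [sub_eq_add_neg]; exact nadd hx (by rwa [norm_neg])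

lemma nsum {ι : Type*} (s : Finset ι) (f : ι → ℚ_[p]) {C : ℝ} (hC : 0 ≤ C)
    (h : ∀ i ∈ s, ‖f i‖ ≤ C) : ‖∑ i ∈ s, f i‖ ≤ C := by
  classical
  induction s using Finset.cons_induction with
  | empty => simpa using hC
  | cons i s his ih =>
    rw [Finset.sum_cons]
    exact nadd (h i (Finset.mem_cons_self i s)) (ih fun j hj => h j (Finset.mem_cons.2 (Or.inr hj)))

lemma norm_int_unit {z : ℤ} (h : ¬ (p:ℤ) ∣ z) : ‖(z:ℚ_[p])‖ = 1 := by
  refine le_antisymm (Padic.norm_int_le_one z) ?_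
  by_contra hlt
  exact h ((Padic.norm_intCast_lt_one_iff (k := z)).1 (lt_of_not_ge hlt))

lemma norm_int_div_le (a b : ℤ) (hb : ¬ (p:ℤ) ∣ b) : ‖((a:ℚ_[p])/(b:ℚ_[p]))‖ ≤ 1 := by
  rw [norm_div, norm_int_unit hb, div_one]; exact Padic.norm_int_le_one a

lemma norm_int_p_le (a : ℤ) (ha : (p:ℤ) ∣ a) : ‖(a:ℚ_[p])‖ ≤ (p:ℝ)⁻¹ := by
  have := (Padic.norm_int_le_pow_iff_dvd a 1).2 (by simpa using ha)
  simpa using this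

lemma norm_int_div_p (a b : ℤ) (ha : (p:ℤ) ∣ a) (hb : ¬ (p:ℤ) ∣ b) :
    ‖((a:ℚ_[p])/(b:ℚ_[p]))‖ ≤ (p:ℝ)⁻¹ := by
  rw [norm_div, norm_int_unit hb, div_one]; exact norm_int_p_le a ha

lemma npowdiff {x y : ℚ_[p]} (hx : ‖x‖ ≤ 1) (hy : ‖y‖ ≤ 1) {C : ℝ} (hC : 0 ≤ C)
    (hxy : ‖x - y‖ ≤ C) (j : ℕ) : ‖x^j - y^j‖ ≤ C := by
  induction j with
  | zero => simpa using hC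
  | succ j ih =>
    have key : x^(j+1) - y^(j+1) = x^j * (x - y) + (x^j - y^j) * y := by ring
    rw [key]
    refine nadd ?_ ?_
    · rw [norm_mul, norm_pow]
      calc ‖x‖^j * ‖x - y‖ ≤ 1 * C := by
            exact mul_le_mul (pow_le_one₀ (norm_nonneg x) hx) hxy (norm_nonneg _) zero_le_one
        _ = C := one_mul C
    · rw [norm_mul]
      calc ‖x^j - y^j‖ * ‖y‖ ≤ C * 1 :=
            mul_le_mul ih hy (norm_nonneg _) hC
        _ = C := mul_one C

lemma zmod_bridge (m : ℕ) :
    ((∑ n ∈ range p, (n:ℤ)^m : ℤ) : ZMod p) = ∑ x : ZMod p, x^m := by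
  push_cast
  exact Finset.sum_nbij' (fun n => ((n : ZMod p))) (fun x => x.val)
    (fun a _ => Finset.mem_univ _)
    (fun x _ => Finset.mem_range.2 (ZMod.val_lt x))
    (fun a ha => ZMod.val_cast_of_lt (Finset.mem_range.1 ha))
    (fun x _ => ZMod.natCast_rightInverse x)
    (fun a _ => rfl)

lemma int_sum_pow_dvd {m : ℕ} (h2 : m < p - 1) :
    (p:ℤ) ∣ ∑ n ∈ range p, (n:ℤ)^m := by
  rw [← ZMod.intCast_zmod_eq_zero_iff_dvd, zmod_bridge]
  exact FiniteField.sum_pow_lt_card_sub_one (K := ZMod p) m (by rwa [ZMod.card])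

lemma int_sum_pow_top : (p:ℤ) ∣ (∑ n ∈ range p, (n:ℤ)^(p-1)) + 1 := by
  rw [← ZMod.intCast_zmod_eq_zero_iff_dvd, Int.cast_add, Int.cast_one, zmod_bridge]
  have h1 : ∑ x : ZMod p, x^(p-1) = ∑ x : ZMod p, (1 - if x = 0 then (1:ZMod p) else 0) := by
    refine Finset.sum_congr rfl fun x _ => ?_
    by_cases h : x = 0
    · subst h
      rw [if_pos rfl, zero_pow (by have := hp.out.two_le; omega)]
      ring
    · rw [if_neg h, ZMod.pow_card_sub_one_eq_one h]
      ring
  rw [h1, Finset.sum_sub_distrib, Finset.sum_const, Finset.card_univ, ZMod.card,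
    Finset.sum_ite_eq' Finset.univ (0 : ZMod p) (fun _ => (1:ZMod p)),
    if_pos (Finset.mem_univ _)]
  simp [ZMod.natCast_self]

lemma fermat_int {n : ℕ} (h1 : ¬ p ∣ n) : (p:ℤ) ∣ (n:ℤ)^(p-1) - 1 := by
  rw [← ZMod.intCast_zmod_eq_zero_iff_dvd]
  push_cast
  rw [ZMod.pow_card_sub_one_eq_one, sub_self]
  rwa [Ne, ZMod.natCast_eq_zero_iff]

lemma nat_unit_norm {n : ℕ} (h : ¬ p ∣ n) : ‖(n:ℚ_[p])‖ = 1 := by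
  have := norm_int_unit (p := p) (z := (n:ℤ)) (by exact_mod_cast h)
  simpa using this

lemma norm_nat_le_one (n : ℕ) : ‖(n:ℚ_[p])‖ ≤ 1 := by
  have := Padic.norm_int_le_one (p := p) (n : ℤ)
  simpa using this

lemma norm_p_pow_le {j : ℕ} (hj : 1 ≤ j) : ‖((p:ℚ_[p]))^j‖ ≤ (p:ℝ)⁻¹ := by
  have hp2 : (1:ℝ) < p := by exact_mod_cast hp.out.one_lt
  rw [norm_pow, Padic.norm_p]
  calc ((p:ℝ)⁻¹)^j ≤ ((p:ℝ)⁻¹)^1 := by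
        apply pow_le_pow_of_le_one (by positivity) (by rw [inv_le_one_iff₀]; right; linarith) hj
    _ = (p:ℝ)⁻¹ := pow_one _

lemma not_dvd_of_lt {m : ℕ} (h1 : 1 ≤ m) (h2 : m < p) : ¬ p ∣ m :=
  fun h => absurd (Nat.le_of_dvd (by omega) h) (by omega)

lemma pinv_nonneg : (0:ℝ) ≤ (p:ℝ)⁻¹ := by positivity

lemma pinv_le_one : ((p:ℝ))⁻¹ ≤ 1 := by
  have hp2 : (1:ℝ) ≤ p := by exact_mod_cast hp.out.one_lt.le
  rw [inv_le_one_iff₀]; right; exact hp2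

/-- Faulhaber rearranged: `bernoulli m * p` in terms of an integer sum and lower terms. -/
lemma bern_key (m : ℕ) (hm : m + 1 ≠ 0) (hmp : ¬ (p:ℕ) ∣ (m+1) ∨ True) :
    bernoulli m * (p:ℚ) = ((∑ n ∈ range p, (n:ℤ)^m : ℤ) : ℚ)
      - ∑ i ∈ range m, bernoulli i * ((m+1).choose i) * (p:ℚ)^(m+1-i)/((m+1 : ℕ):ℚ) := by
  have F := _root_.sum_range_pow p m
  rw [Finset.sum_range_succ] at F
  have hs : (∑ k ∈ range p, (k:ℚ)^m) = ((∑ n ∈ range p, (n:ℤ)^m : ℤ) : ℚ) := by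
    push_cast; rfl
  have hchoose : (((m+1).choose m : ℕ) : ℚ) = ((m+1 : ℕ):ℚ) := by
    rw [Nat.choose_succ_self_right]
  have h1 : m + 1 - m = 1 := by omega
  rw [hs, hchoose, h1] at F
  have hne : ((m+1 : ℕ):ℚ) ≠ 0 := by
    exact_mod_cast Nat.succ_ne_zero m
  have hc : ((m+1 : ℕ):ℚ) * (((m+1 : ℕ):ℚ))⁻¹ = 1 := mul_inv_cancel₀ hne
  push_cast at F hc ⊢
  linear_combination (-1:ℚ) * F - (bernoulli m * (p:ℚ)) * hc

lemma bern_int : ∀ {m : ℕ}, m ≤ p - 2 → ‖((bernoulli m : ℚ) : ℚ_[p])‖ ≤ 1 := by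
  intro m
  induction m using Nat.strong_induction_on with
  | _ m ih =>
    intro hm
    rcases Nat.eq_zero_or_pos m with rfl | hm0
    · simp
    have hp2 := hp.out.two_le
    have hB := bern_key (p := p) m (Nat.succ_ne_zero m) (Or.inr trivial)
    have hQ := congrArg (fun x : ℚ => (x : ℚ_[p])) hB
    push_cast at hQ
    have hnorm : ‖((bernoulli m : ℚ) : ℚ_[p]) * (p:ℚ_[p])‖ ≤ (p:ℝ)⁻¹ := by
      rw [hQ]
      refine nsub ?_ ?_
      · have hss : (∑ n ∈ range p, ((n:ℚ_[p]))^m) = ((∑ n ∈ range p, (n:ℤ)^m : ℤ) : ℚ_[p]) := by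
          push_cast; rfl
        rw [hss]
        exact norm_int_p_le _ (int_sum_pow_dvd (m := m) (by omega))
      · refine nsum _ _ pinv_nonneg ?_
        intro i hi
        have hirange := Finset.mem_range.1 hi
        rw [norm_div, norm_mul, norm_mul]
        have h1 : ‖((bernoulli i : ℚ) : ℚ_[p])‖ ≤ 1 := ih i hirange (by omega)
        have h2 : ‖(((m+1).choose i : ℕ) : ℚ_[p])‖ ≤ 1 := norm_nat_le_one _
        have h3 : ‖((p:ℚ_[p]))^(m+1-i)‖ ≤ (p:ℝ)⁻¹ := by
          exact norm_p_pow_le (by omega)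
        have h4 : ‖((m:ℚ_[p]) + 1)‖ = 1 := by
          have := nat_unit_norm (p := p) (n := m+1) (not_dvd_of_lt (by omega) (by omega))
          push_cast at this
          exact this
        rw [h4, div_one]
        calc ‖((bernoulli i : ℚ) : ℚ_[p])‖ * ‖(((m+1).choose i : ℕ) : ℚ_[p])‖ * ‖((p:ℚ_[p]))^(m+1-i)‖
            ≤ 1 * 1 * (p:ℝ)⁻¹ := by
              apply mul_le_mul (mul_le_mul h1 h2 (norm_nonneg _) zero_le_one) h3
                (norm_nonneg _) (by norm_num)
          _ = (p:ℝ)⁻¹ := by ring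
    have hpne : (0:ℝ) < (p:ℝ)⁻¹ := by
      have : (0:ℝ) < p := by exact_mod_cast hp.out.pos
      positivity
    rw [norm_mul, Padic.norm_p] at hnorm
    have h6 : ‖((bernoulli m : ℚ) : ℚ_[p])‖ * (p:ℝ)⁻¹ ≤ 1 * (p:ℝ)⁻¹ := by
      rw [one_mul]; exact hnorm
    exact le_of_mul_le_mul_right h6 hpne

lemma bern_top : ‖((p:ℚ_[p])) * ((bernoulli (p-1) : ℚ) : ℚ_[p]) + 1‖ ≤ (p:ℝ)⁻¹ := by
  have hp2 := hp.out.two_le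
  have hm1 : (p - 1) + 1 = p := by omega
  have hB := bern_key (p := p) (p-1) (Nat.succ_ne_zero _) (Or.inr trivial)
  rw [hm1] at hB
  have hQ := congrArg (fun x : ℚ => (x : ℚ_[p])) hB
  push_cast at hQ
  have key : ((p:ℚ_[p])) * ((bernoulli (p-1) : ℚ) : ℚ_[p]) + 1
      = (((∑ n ∈ range p, (n:ℤ)^(p-1) : ℤ) : ℚ_[p]) + 1)
        - ∑ i ∈ range (p-1), ((bernoulli i : ℚ) : ℚ_[p]) * ((p.choose i : ℕ) : ℚ_[p])
            * ((p:ℚ_[p]))^(p-i)/((p : ℕ):ℚ_[p]) := by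
    rw [mul_comm]
    rw [hQ]
    push_cast
    ring
  rw [key]
  refine nsub ?_ ?_
  · have := norm_int_p_le (p := p) _ int_sum_pow_top
    push_cast at this ⊢
    exact this
  · refine nsum _ _ pinv_nonneg ?_
    intro i hi
    have hirange := Finset.mem_range.1 hi
    rw [norm_div, norm_mul, norm_mul]
    have h1 : ‖((bernoulli i : ℚ) : ℚ_[p])‖ ≤ 1 := bern_int (by omega)
    have h2 : ‖((p.choose i : ℕ) : ℚ_[p])‖ ≤ 1 := norm_nat_le_one _
    have h3 : ‖((p:ℚ_[p]))^(p-i)‖ = ((p:ℝ)⁻¹)^(p-i) := by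
      rw [norm_pow, Padic.norm_p]
    have h4 : ‖((p:ℕ):ℚ_[p])‖ = (p:ℝ)⁻¹ := Padic.norm_p
    rw [h3, h4]
    have hppos : (0:ℝ) < p := by exact_mod_cast hp.out.pos
    have hple : ((p:ℝ)⁻¹)^(p-i) ≤ (p:ℝ)⁻¹ * (p:ℝ)⁻¹ := by
      calc ((p:ℝ)⁻¹)^(p-i) ≤ ((p:ℝ)⁻¹)^2 := by
            apply pow_le_pow_of_le_one (by positivity) pinv_le_one (by omega)
        _ = (p:ℝ)⁻¹ * (p:ℝ)⁻¹ := sq _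
    calc ‖((bernoulli i : ℚ) : ℚ_[p])‖ * ‖((p.choose i : ℕ) : ℚ_[p])‖ * ((p:ℝ)⁻¹)^(p-i) / (p:ℝ)⁻¹
        ≤ 1 * 1 * ((p:ℝ)⁻¹ * (p:ℝ)⁻¹) / (p:ℝ)⁻¹ := by
          gcongr <;> first
            | exact h1
            | exact h2
            | positivity
            | exact (norm_nonneg _).trans h1
      _ = (p:ℝ)⁻¹ := by field_simp
open PowerSeries Nat in

lemma bern_half (n : ℕ) :
    Polynomial.eval (1/2 : ℚ) (Polynomial.bernoulli n) = (2 * (1/2:ℚ)^n - 1) * bernoulli n := by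
  set B : ℚ⟦X⟧ := bernoulliPowerSeries ℚ with hBdef
  set E : ℚ⟦X⟧ := exp ℚ with hEdef
  set R : ℚ⟦X⟧ := rescale (1/2 : ℚ) B with hRdef
  set E2 : ℚ⟦X⟧ := rescale (1/2 : ℚ) E with hE2def
  have hB : B * (E - 1) = X := bernoulliPowerSeries_mul_exp_sub_one ℚ
  have hR : R * (E2 - 1) = C (1/2:ℚ) * X := by
    have := congrArg (rescale (1/2 : ℚ)) hB
    rw [map_mul, map_sub, map_one] at this
    rw [hRdef, hE2def, this]
    ext k
    simp only [coeff_rescale, coeff_X, coeff_C_mul]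
    split_ifs with h
    · subst h; norm_num
    · ring
  have hexp : E2 * E2 = E := by
    rw [hE2def, hEdef, exp_mul_exp_eq_exp_add, show (1/2 + 1/2 : ℚ) = 1 by norm_num,
      rescale_one, RingHom.id_apply]
  have e1 : E - 1 = (E2 - 1) * (E2 + 1) := by linear_combination -hexp
  have hC2 : (C (2:ℚ)) * (C (1/2:ℚ)) = 1 := by
    rw [← map_mul]; norm_num
  have hne : E - 1 ≠ 0 := by
    intro h
    have h1 := congrArg (coeff 1) h
    simp [hEdef, coeff_exp, coeff_one] at h1
  have key : (PowerSeries.mk fun k =>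
        (Polynomial.aeval (1/2:ℚ)) ((1 / k ! : ℚ) • Polynomial.bernoulli k))
      = C (2:ℚ) * R - B := by
    apply mul_right_cancel₀ hne
    rw [Polynomial.bernoulli_generating_function (1/2 : ℚ)]
    rw [sub_mul, hB, e1]
    rw [show C (2:ℚ) * R * ((E2 - 1) * (E2 + 1)) = C (2:ℚ) * (R * (E2 - 1)) * (E2 + 1) by ring, hR]
    linear_combination (-(X * (E2 + 1) : ℚ⟦X⟧)) * hC2
  have hcoeff := congrArg (coeff n) key
  rw [coeff_mk] at hcoeff
  rw [map_sub, coeff_C_mul, hRdef, coeff_rescale, hBdef] at hcoeff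
  simp only [Algebra.algebraMap_self, RingHom.id_apply, map_smul, smul_eq_mul] at hcoeff
  have haev : (Polynomial.aeval (1/2:ℚ)) (Polynomial.bernoulli n)
      = Polynomial.eval (1/2:ℚ) (Polynomial.bernoulli n) := by
    rw [Polynomial.aeval_def, Polynomial.eval₂_eq_eval_map, Algebra.algebraMap_self,
      Polynomial.map_id]
  rw [haev] at hcoeff
  have hcoeffB : (coeff n) (bernoulliPowerSeries ℚ) = bernoulli n / (n ! : ℚ) := by
    rw [bernoulliPowerSeries, coeff_mk, Algebra.algebraMap_self, RingHom.id_apply]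
  rw [hcoeffB] at hcoeff
  have hfact : ((n ! : ℕ) : ℚ) ≠ 0 := by exact_mod_cast Nat.factorial_ne_zero n
  have hpow : ((2:ℚ))^n * ((1/2:ℚ))^n = 1 := by
    rw [← mul_pow]; norm_num
  field_simp at hcoeff
  have h2 : Polynomial.eval (1/2:ℚ) (Polynomial.bernoulli n) * 2^n
      = 2 * bernoulli n - 2^n * bernoulli n := by
    apply mul_right_cancel₀ hfact
    apply mul_right_cancel₀ hfact
    linear_combination (2^n * ((n ! : ℕ) : ℚ)^2) * hcoeff + (2 * bernoulli n * ((n ! : ℕ) : ℚ)^2) * hpow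
  have h2n : ((2:ℚ))^n ≠ 0 := pow_ne_zero _ two_ne_zero
  apply mul_right_cancel₀ h2n
  linear_combination h2 - 2 * bernoulli n * hpow

open Nat in
lemma eval_half_sum (m : ℕ) :
    ∑ i ∈ range (m+1), bernoulli i * ((m+1).choose i : ℚ) * (1/2:ℚ)^(m+1-i)
      = 2*((1/2:ℚ)^(m+1) - 1) * bernoulli (m+1) := by
  have hev : Polynomial.eval (1/2:ℚ) (Polynomial.bernoulli (m+1))
      = ∑ i ∈ range (m+2), bernoulli i * ((m+1).choose i : ℚ) * (1/2:ℚ)^(m+1-i) := by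
    rw [Polynomial.bernoulli, Polynomial.eval_finset_sum]
    exact Finset.sum_congr rfl fun i _ => by rw [Polynomial.eval_monomial]
  have h2 := bern_half (m+1)
  rw [hev, Finset.sum_range_succ] at h2
  simp only [Nat.choose_self, Nat.sub_self, pow_zero, Nat.cast_one, mul_one] at h2
  linarith [h2]

lemma not_dvd_two (hodd : p % 2 = 1) : ¬ p ∣ 2 := by
  intro h
  have := Nat.le_of_dvd (by norm_num) h
  have := hp.out.two_le
  omega

lemma half_sum_pow (m : ℕ) (hm1 : 1 ≤ m) (hm2 : m ≤ p - 2) (hodd : p % 2 = 1) :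
    ‖((((∑ k ∈ range ((p+1)/2), ((k:ℚ))^m)
        - 2*((1/2:ℚ)^(m+1) - 1) * bernoulli (m+1) / ((m:ℚ)+1) : ℚ)) : ℚ_[p])‖ ≤ (p:ℝ)⁻¹ := by
  have hp2 := hp.out.two_le
  have hMQ : (((p+1)/2 : ℕ) : ℚ) = ((p:ℚ)+1)/2 := by
    rw [Nat.cast_div (by omega) (by norm_num)]
    push_cast; ring
  have hne : ((m:ℚ)+1) ≠ 0 := by
    have : ((m+1:ℕ):ℚ) ≠ 0 := by exact_mod_cast Nat.succ_ne_zero m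
    push_cast at this; exact this
  have hexact : ((∑ k ∈ range ((p+1)/2), ((k:ℚ))^m)
        - 2*((1/2:ℚ)^(m+1) - 1) * bernoulli (m+1) / ((m:ℚ)+1) : ℚ)
      = ∑ i ∈ range (m+1), (bernoulli i * ((m+1).choose i : ℚ) / ((m:ℚ)+1))
          * ((((p+1)/2 : ℕ):ℚ)^(m+1-i) - (1/2:ℚ)^(m+1-i)) := by
    have F := _root_.sum_range_pow ((p+1)/2) m
    have hsum := eval_half_sum m
    have hsplit : ∑ i ∈ range (m+1), (bernoulli i * ((m+1).choose i : ℚ) / ((m:ℚ)+1))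
          * ((((p+1)/2 : ℕ):ℚ)^(m+1-i) - (1/2:ℚ)^(m+1-i))
        = (∑ i ∈ range (m+1),
            bernoulli i * ((m+1).choose i : ℚ) * (((p+1)/2 : ℕ):ℚ)^(m+1-i) / ((m:ℚ)+1))
          - (∑ i ∈ range (m+1), bernoulli i * ((m+1).choose i : ℚ) * (1/2:ℚ)^(m+1-i))
              / ((m:ℚ)+1) := by
      rw [Finset.sum_div, ← Finset.sum_sub_distrib]
      exact Finset.sum_congr rfl fun i _ => by ring
    rw [hsplit, ← F, hsum]
  rw [hexact]
  push_cast
  refine nsum _ _ pinv_nonneg ?_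
  intro i hi
  have hirange := Finset.mem_range.1 hi
  rw [norm_mul]
  have hfac1 : ‖((bernoulli i : ℚ) : ℚ_[p]) * (((m+1).choose i : ℕ) : ℚ_[p]) / ((m:ℚ_[p])+1)‖ ≤ 1 := by
    rw [norm_div, norm_mul]
    have h1 : ‖((bernoulli i : ℚ) : ℚ_[p])‖ ≤ 1 := bern_int (by omega)
    have h2 : ‖(((m+1).choose i : ℕ) : ℚ_[p])‖ ≤ 1 := norm_nat_le_one _
    have h4 : ‖((m:ℚ_[p]) + 1)‖ = 1 := by
      have := nat_unit_norm (p := p) (n := m+1) (not_dvd_of_lt (by omega) (by omega))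
      push_cast at this
      exact this
    rw [h4, div_one]
    calc ‖((bernoulli i : ℚ) : ℚ_[p])‖ * ‖(((m+1).choose i : ℕ) : ℚ_[p])‖ ≤ 1 * 1 :=
          mul_le_mul h1 h2 (norm_nonneg _) zero_le_one
      _ = 1 := by norm_num
  have h2norm : ‖((2:ℚ_[p]))‖ = 1 := by
    have := nat_unit_norm (p := p) (n := 2) (not_dvd_two hodd)
    push_cast at this
    exact this
  have hfac2 : ‖((((p+1)/2 : ℕ):ℚ_[p]))^(m+1-i) - ((1:ℚ_[p])/2)^(m+1-i)‖ ≤ (p:ℝ)⁻¹ := by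
    refine npowdiff ?_ ?_ pinv_nonneg ?_ _
    · exact norm_nat_le_one _
    · rw [norm_div, norm_one, h2norm]; norm_num
    · have hxy : ((((p+1)/2 : ℕ):ℚ_[p])) - (1:ℚ_[p])/2 = ((p:ℚ_[p]))/2 := by
        have hq : ((((p+1)/2 : ℕ):ℚ) - 1/2 : ℚ) = (p:ℚ)/2 := by rw [hMQ]; ring
        have := congrArg (fun x:ℚ => (x:ℚ_[p])) hq
        push_cast at this
        exact this
      rw [hxy, norm_div, h2norm, div_one]
      rw [show ((p:ℚ_[p])) = (((p:ℕ)):ℚ_[p]) by norm_cast, Padic.norm_p]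
  calc ‖((bernoulli i : ℚ) : ℚ_[p]) * (((m+1).choose i : ℕ) : ℚ_[p]) / ((m:ℚ_[p])+1)‖
        * ‖((((p+1)/2 : ℕ):ℚ_[p]))^(m+1-i) - ((1:ℚ_[p])/2)^(m+1-i)‖
      ≤ 1 * (p:ℝ)⁻¹ := mul_le_mul hfac1 hfac2 (norm_nonneg _) zero_le_one
    _ = (p:ℝ)⁻¹ := one_mul _

lemma term_close {k r : ℕ} (h1 : 1 ≤ k) (h2 : k < p) (hr : r ≤ p - 1) :
    ‖(((1/(k:ℚ)^r - (k:ℚ)^(p-1-r)) : ℚ) : ℚ_[p])‖ ≤ (p:ℝ)⁻¹ := by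
  have hk : ¬ p ∣ k := not_dvd_of_lt h1 h2
  have hkq : (k:ℚ) ≠ 0 := by
    simp only [ne_eq, Nat.cast_eq_zero]; omega
  have hpowq : (k:ℚ)^(p-1-r) * (k:ℚ)^r = (k:ℚ)^(p-1) := by
    rw [← pow_add]; congr 1; omega
  have hident : ((1/(k:ℚ)^r - (k:ℚ)^(p-1-r)) : ℚ) = (1 - (k:ℚ)^(p-1)) / (k:ℚ)^r := by
    field_simp
    linear_combination (-1:ℚ) * hpowq
  rw [hident]
  push_cast
  rw [norm_div, norm_pow, nat_unit_norm hk, one_pow, div_one]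
  have hint : ((1:ℚ_[p]) - ((k:ℚ_[p]))^(p-1)) = (((1 - (k:ℤ)^(p-1) : ℤ)) : ℚ_[p]) := by
    push_cast; ring
  rw [hint]
  refine norm_int_p_le _ ?_
  rw [show (1 - (k:ℤ)^(p-1)) = -((k:ℤ)^(p-1) - 1) from by ring]
  exact dvd_neg.mpr (fermat_int (p := p) hk)

lemma range_half_eq (hodd : p % 2 = 1) :
    range ((p+1)/2) = insert 0 (Icc 1 ((p-1)/2)) := by
  have hp2 := hp.out.two_le
  ext x
  simp only [Finset.mem_range, Finset.mem_insert, Finset.mem_Icc]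
  omega

lemma range_p_eq : range p = insert 0 (Icc 1 (p-1)) := by
  have hp2 := hp.out.two_le
  ext x
  simp only [Finset.mem_range, Finset.mem_insert, Finset.mem_Icc]
  omega

lemma half_inv (r : ℕ) (hr1 : 1 ≤ r) (hrp : r ≤ p - 2) (hodd : p % 2 = 1) :
    ‖((((∑ k ∈ Icc 1 ((p-1)/2), 1/(k:ℚ)^r) - ∑ k ∈ range ((p+1)/2), ((k:ℚ))^(p-1-r) : ℚ)) : ℚ_[p])‖
      ≤ (p:ℝ)⁻¹ := by
  have hp2 := hp.out.two_le
  have hre : ∑ k ∈ range ((p+1)/2), ((k:ℚ))^(p-1-r) = ∑ k ∈ Icc 1 ((p-1)/2), ((k:ℚ))^(p-1-r) := by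
    rw [range_half_eq hodd, Finset.sum_insert (by simp)]
    rw [Nat.cast_zero, zero_pow (by omega), zero_add]
  rw [hre, ← Finset.sum_sub_distrib]
  rw [Rat.cast_sum]
  refine nsum _ _ pinv_nonneg ?_
  intro k hk
  have hmem := Finset.mem_Icc.1 hk
  exact term_close (by omega) (by omega) (by omega)

lemma Hr_norm (r : ℕ) (hr1 : 1 ≤ r) (hr2 : r ≤ p - 2) :
    ‖(((∑ n ∈ Icc 1 (p-1), 1/(n:ℚ)^r : ℚ)) : ℚ_[p])‖ ≤ (p:ℝ)⁻¹ := by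
  have hp2 := hp.out.two_le
  have hsplit : (∑ n ∈ Icc 1 (p-1), 1/(n:ℚ)^r : ℚ)
      = (∑ n ∈ Icc 1 (p-1), (1/(n:ℚ)^r - (n:ℚ)^(p-1-r)))
        + ∑ n ∈ Icc 1 (p-1), ((n:ℚ))^(p-1-r) := by
    rw [← Finset.sum_add_distrib]
    exact Finset.sum_congr rfl fun n _ => by ring
  rw [hsplit, Rat.cast_add]
  refine nadd ?_ ?_
  · rw [Rat.cast_sum]
    refine nsum _ _ pinv_nonneg ?_
    intro k hk
    have hmem := Finset.mem_Icc.1 hk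
    exact term_close (by omega) (by omega) (by omega)
  · have hre : (∑ n ∈ Icc 1 (p-1), ((n:ℚ))^(p-1-r) : ℚ)
        = ((∑ n ∈ range p, (n:ℤ)^(p-1-r) : ℤ) : ℚ) := by
      rw [range_p_eq, Finset.sum_insert (by simp)]
      push_cast
      rw [zero_pow (by omega), zero_add]
    rw [hre]
    have : (((((∑ n ∈ range p, (n:ℤ)^(p-1-r) : ℤ) : ℚ))) : ℚ_[p])
        = (((∑ n ∈ range p, (n:ℤ)^(p-1-r) : ℤ)) : ℚ_[p]) := by push_cast; ring
    rw [this]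
    exact norm_int_p_le _ (int_sum_pow_dvd (by omega))

lemma zmod_two_ne (hodd : p % 2 = 1) : ((2:ZMod p)) ≠ 0 := by
  intro h
  have h2 : ((2:ℕ):ZMod p) = 0 := by exact_mod_cast h
  exact not_dvd_two (p:=p) hodd ((ZMod.natCast_eq_zero_iff 2 p).1 h2)

lemma zdvd1 (hodd : p % 2 = 1) : (p:ℤ) ∣ 2^(p-1)*((p:ℤ)-1) + 1 := by
  have h2 : ((2:ZMod p))^(p-1) = 1 := ZMod.pow_card_sub_one_eq_one (zmod_two_ne hodd)
  rw [← ZMod.intCast_zmod_eq_zero_iff_dvd]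
  push_cast
  rw [h2, ZMod.natCast_self]
  ring

lemma zdvd2 (hp5 : 5 ≤ p) (hodd : p % 2 = 1) : (p:ℤ) ∣ 1 + 2^(p-3)*((p:ℤ)-4) := by
  have h2 : ((2:ZMod p))^(p-1) = 1 := ZMod.pow_card_sub_one_eq_one (zmod_two_ne hodd)
  have hsplit : ((2:ZMod p))^(p-1) = 2^2 * 2^(p-3) := by
    rw [← pow_add]; congr 1; omega
  rw [← ZMod.intCast_zmod_eq_zero_iff_dvd]
  push_cast
  rw [ZMod.natCast_self]
  linear_combination hsplit - h2

lemma fermat2 (hodd : p % 2 = 1) : (p:ℤ) ∣ (2:ℤ)^(p-1) - 1 := by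
  have := fermat_int (p := p) (n := 2) (not_dvd_two hodd)
  exact_mod_cast this

lemma qq_norm (hodd : p % 2 = 1) :
    ‖((((2^(p-1) - 1 : ℚ)/(p:ℚ) : ℚ)) : ℚ_[p])‖ ≤ 1 := by
  push_cast
  have hnum : ((2:ℚ_[p])^(p-1) - 1) = (((2^(p-1) - 1 : ℤ)) : ℚ_[p]) := by push_cast; ring
  rw [norm_div, hnum]
  have h1 : ‖(((2^(p-1) - 1 : ℤ)) : ℚ_[p])‖ ≤ (p:ℝ)⁻¹ := norm_int_p_le _ (fermat2 hodd)
  have h2 : ‖((p:ℚ_[p]))‖ = (p:ℝ)⁻¹ := Padic.norm_p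
  rw [h2]
  have hppos : (0:ℝ) < (p:ℝ)⁻¹ := by
    have : (0:ℝ) < p := by exact_mod_cast hp.out.pos
    positivity
  calc ‖(((2^(p-1) - 1 : ℤ)) : ℚ_[p])‖ / (p:ℝ)⁻¹ ≤ (p:ℝ)⁻¹ / (p:ℝ)⁻¹ := by gcongr
    _ = 1 := div_self hppos.ne'

lemma T1_cong (hp5 : 5 ≤ p) (hodd : p % 2 = 1) :
    ‖(((∑ k ∈ Icc 1 ((p-1)/2), 1/(k:ℚ)^1 : ℚ)) : ℚ_[p])
        + 2 * ((((2^(p-1) - 1 : ℚ)/(p:ℚ) : ℚ)) : ℚ_[p])‖ ≤ (p:ℝ)⁻¹ := by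
  have hp2 := hp.out.two_le
  have e1 : p - 2 + 1 = p - 1 := by omega
  have e2 : p - 1 - 1 = p - 2 := by omega
  have A1 := half_inv (p := p) 1 (by omega) (by omega) hodd
  rw [e2] at A1
  have A2 := half_sum_pow (p := p) (p-2) (by omega) (by omega) hodd
  rw [e1] at A2
  -- notation
  set T : ℚ := ∑ k ∈ Icc 1 ((p-1)/2), 1/(k:ℚ)^1 with hT
  set U : ℚ := ∑ k ∈ range ((p+1)/2), ((k:ℚ))^(p-2) with hU
  set V : ℚ := 2*((1/2:ℚ)^(p-1) - 1) * bernoulli (p-1) / (((p-2:ℕ):ℚ)+1) with hV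
  -- A3 : ‖(V : ℚ_[p]) + 2*qq‖ ≤ p⁻¹
  have hdQ : (((p-2:ℕ):ℚ_[p])) + 1 = ((p:ℚ_[p])) - 1 := by
    have : ((p-2:ℕ):ℚ_[p]) = ((p:ℚ_[p])) - 2 := by
      rw [Nat.cast_sub (by omega)]; norm_num
    rw [this]; ring
  have hppne : ((p:ℚ_[p])) ≠ 0 := by
    exact_mod_cast Nat.cast_ne_zero.2 hp.out.pos.ne'
  have hdne : ((p:ℚ_[p])) - 1 ≠ 0 := by
    have hnorm : ‖((p:ℚ_[p])) - 1‖ = 1 := by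
      have h1 : ((p:ℚ_[p])) - 1 = (((p-1:ℕ)):ℚ_[p]) := by
        rw [Nat.cast_sub (by omega)]; norm_num
      rw [h1]
      exact nat_unit_norm (not_dvd_of_lt (by omega) (by omega))
    intro h
    rw [h, norm_zero] at hnorm
    norm_num at hnorm
  have hu_ne : ((2:ℚ_[p]))^(p-1) ≠ 0 := pow_ne_zero _ two_ne_zero
  have hx : ((1:ℚ_[p])/2)^(p-1) * ((2:ℚ_[p]))^(p-1) = 1 := by
    rw [← mul_pow]; norm_num
  have hiden : ((V : ℚ) : ℚ_[p]) + 2 * ((((2^(p-1) - 1 : ℚ)/(p:ℚ) : ℚ)) : ℚ_[p])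
      = 2 * ((((2^(p-1) - 1 : ℚ)/(p:ℚ) : ℚ)) : ℚ_[p])
          * ((((2:ℚ_[p]))^(p-1) * (((p:ℚ_[p])) - 1)
              - ((p:ℚ_[p])) * ((bernoulli (p-1) : ℚ) : ℚ_[p])))
          / (((2:ℚ_[p]))^(p-1) * (((p:ℚ_[p])) - 1)) := by
    rw [hV]
    push_cast
    rw [hdQ]
    field_simp
    linear_combination (((bernoulli (p-1) : ℚ) : ℚ_[p]) * (p:ℚ_[p])) * hx
  have h2norm : ‖((2:ℚ_[p]))‖ = 1 := by
    have := nat_unit_norm (p := p) (n := 2) (not_dvd_two hodd)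
    push_cast at this
    exact this
  have hunorm : ‖((2:ℚ_[p]))^(p-1)‖ = 1 := by rw [norm_pow, h2norm, one_pow]
  have hdnorm : ‖((p:ℚ_[p])) - 1‖ = 1 := by
    have h1 : ((p:ℚ_[p])) - 1 = (((p-1:ℕ)):ℚ_[p]) := by
      rw [Nat.cast_sub (by omega)]; norm_num
    rw [h1]
    exact nat_unit_norm (not_dvd_of_lt (by omega) (by omega))
  have A3 : ‖((V : ℚ) : ℚ_[p]) + 2 * ((((2^(p-1) - 1 : ℚ)/(p:ℚ) : ℚ)) : ℚ_[p])‖ ≤ (p:ℝ)⁻¹ := by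
    rw [hiden, norm_div, norm_mul, norm_mul, norm_mul, hunorm, hdnorm]
    have hq1 : ‖((((2^(p-1) - 1 : ℚ)/(p:ℚ) : ℚ)) : ℚ_[p])‖ ≤ 1 := qq_norm hodd
    have hnum : ‖((2:ℚ_[p]))^(p-1) * (((p:ℚ_[p])) - 1)
        - ((p:ℚ_[p])) * ((bernoulli (p-1) : ℚ) : ℚ_[p])‖ ≤ (p:ℝ)⁻¹ := by
      have hre : ((2:ℚ_[p]))^(p-1) * (((p:ℚ_[p])) - 1)
          - ((p:ℚ_[p])) * ((bernoulli (p-1) : ℚ) : ℚ_[p])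
          = (((2^(p-1)*((p:ℤ)-1) + 1 : ℤ)) : ℚ_[p])
            - (((p:ℚ_[p])) * ((bernoulli (p-1) : ℚ) : ℚ_[p]) + 1) := by
        push_cast; ring
      rw [hre]
      exact nsub (norm_int_p_le _ (zdvd1 hodd)) (bern_top (p := p))
    calc ‖(2:ℚ_[p])‖ * ‖((((2^(p-1) - 1 : ℚ)/(p:ℚ) : ℚ)) : ℚ_[p])‖
          * ‖((2:ℚ_[p]))^(p-1) * (((p:ℚ_[p])) - 1)
              - ((p:ℚ_[p])) * ((bernoulli (p-1) : ℚ) : ℚ_[p])‖ / (1*1)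
        ≤ 1 * 1 * (p:ℝ)⁻¹ / (1*1) := by
          rw [h2norm]
          gcongr <;> first
            | exact hq1
            | exact hnum
            | positivity
            | exact (norm_nonneg _).trans hq1
      _ = (p:ℝ)⁻¹ := by norm_num
  have hsum : ((T:ℚ):ℚ_[p]) + 2 * ((((2^(p-1) - 1 : ℚ)/(p:ℚ) : ℚ)) : ℚ_[p])
      = (((T - U : ℚ)):ℚ_[p]) + (((U - V : ℚ)):ℚ_[p])
        + (((V:ℚ):ℚ_[p]) + 2 * ((((2^(p-1) - 1 : ℚ)/(p:ℚ) : ℚ)) : ℚ_[p])) := by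
    push_cast; ring
  rw [hsum]
  exact nadd (nadd A1 A2) A3

lemma T3_cong (hp5 : 5 ≤ p) (hodd : p % 2 = 1) :
    ‖(((∑ k ∈ Icc 1 ((p-1)/2), 1/(k:ℚ)^3 : ℚ)) : ℚ_[p])
        + 2 * ((bernoulli (p-3) : ℚ) : ℚ_[p])‖ ≤ (p:ℝ)⁻¹ := by
  have hp2 := hp.out.two_le
  have e1 : p - 4 + 1 = p - 3 := by omega
  have e2 : p - 1 - 3 = p - 4 := by omega
  have A1 := half_inv (p := p) 3 (by omega) (by omega) hodd
  rw [e2] at A1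
  have A2 := half_sum_pow (p := p) (p-4) (by omega) (by omega) hodd
  rw [e1] at A2
  set T : ℚ := ∑ k ∈ Icc 1 ((p-1)/2), 1/(k:ℚ)^3 with hT
  set U : ℚ := ∑ k ∈ range ((p+1)/2), ((k:ℚ))^(p-4) with hU
  set V : ℚ := 2*((1/2:ℚ)^(p-3) - 1) * bernoulli (p-3) / (((p-4:ℕ):ℚ)+1) with hV
  have hdQ : (((p-4:ℕ):ℚ_[p])) + 1 = ((p:ℚ_[p])) - 3 := by
    have : ((p-4:ℕ):ℚ_[p]) = ((p:ℚ_[p])) - 4 := by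
      rw [Nat.cast_sub (by omega)]; norm_num
    rw [this]; ring
  have hdnorm : ‖((p:ℚ_[p])) - 3‖ = 1 := by
    have h1 : ((p:ℚ_[p])) - 3 = (((p-3:ℕ)):ℚ_[p]) := by
      rw [Nat.cast_sub (by omega)]; norm_num
    rw [h1]
    exact nat_unit_norm (not_dvd_of_lt (by omega) (by omega))
  have hdne : ((p:ℚ_[p])) - 3 ≠ 0 := by
    intro h
    rw [h, norm_zero] at hdnorm
    norm_num at hdnorm
  have h2norm : ‖((2:ℚ_[p]))‖ = 1 := by
    have := nat_unit_norm (p := p) (n := 2) (not_dvd_two hodd)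
    push_cast at this
    exact this
  have hvnorm : ‖((2:ℚ_[p]))^(p-3)‖ = 1 := by rw [norm_pow, h2norm, one_pow]
  have hiden : ((V : ℚ) : ℚ_[p]) + 2 * ((bernoulli (p-3) : ℚ) : ℚ_[p])
      = 2 * ((bernoulli (p-3) : ℚ) : ℚ_[p])
          * ((1:ℚ_[p]) + ((2:ℚ_[p]))^(p-3) * (((p:ℚ_[p])) - 4))
          / (((2:ℚ_[p]))^(p-3) * (((p:ℚ_[p])) - 3)) := by
    rw [hV]
    push_cast
    rw [hdQ]
    field_simp
    have hx3 : ((1:ℚ_[p])/2)^(p-3) * ((2:ℚ_[p]))^(p-3) = 1 := by rw [← mul_pow]; norm_num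
    linear_combination ((bernoulli (p-3) : ℚ) : ℚ_[p]) * hx3
  have A3 : ‖((V : ℚ) : ℚ_[p]) + 2 * ((bernoulli (p-3) : ℚ) : ℚ_[p])‖ ≤ (p:ℝ)⁻¹ := by
    rw [hiden, norm_div, norm_mul, norm_mul, norm_mul, hvnorm, hdnorm]
    have hb : ‖((bernoulli (p-3) : ℚ) : ℚ_[p])‖ ≤ 1 := bern_int (by omega)
    have hnum : ‖(1:ℚ_[p]) + ((2:ℚ_[p]))^(p-3) * (((p:ℚ_[p])) - 4)‖ ≤ (p:ℝ)⁻¹ := by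
      have hre : (1:ℚ_[p]) + ((2:ℚ_[p]))^(p-3) * (((p:ℚ_[p])) - 4)
          = (((1 + 2^(p-3)*((p:ℤ)-4) : ℤ)) : ℚ_[p]) := by
        push_cast; ring
      rw [hre]
      exact norm_int_p_le _ (zdvd2 hp5 hodd)
    calc ‖(2:ℚ_[p])‖ * ‖((bernoulli (p-3) : ℚ) : ℚ_[p])‖
          * ‖(1:ℚ_[p]) + ((2:ℚ_[p]))^(p-3) * (((p:ℚ_[p])) - 4)‖ / (1*1)
        ≤ 1 * 1 * (p:ℝ)⁻¹ / (1*1) := by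
          rw [h2norm]
          gcongr <;> first
            | exact hb
            | exact hnum
            | positivity
            | exact (norm_nonneg _).trans hb
      _ = (p:ℝ)⁻¹ := by norm_num
  have hsum : ((T:ℚ):ℚ_[p]) + 2 * ((bernoulli (p-3) : ℚ) : ℚ_[p])
      = (((T - U : ℚ)):ℚ_[p]) + (((U - V : ℚ)):ℚ_[p])
        + (((V:ℚ):ℚ_[p]) + 2 * ((bernoulli (p-3) : ℚ) : ℚ_[p])) := by
    push_cast; ring
  rw [hsum]
  exact nadd (nadd A1 A2) A3

lemma P1_norm_le : ‖((∑ n ∈ Icc 1 (p-1), ((-1:ℚ))^n/(n:ℚ) : ℚ) : ℚ_[p])‖ ≤ 1 := by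
  rw [Rat.cast_sum]
  refine nsum _ _ zero_le_one ?_
  intro n hn
  have hmem := Finset.mem_Icc.1 hn
  push_cast
  rw [norm_div, norm_pow, norm_neg, norm_one, one_pow,
    nat_unit_norm (not_dvd_of_lt (by omega) (by omega)), div_one]


/-- For a prime `p > 3` with Fermat quotient `q_p(2) = (2^{p-1}-1)/p`:
`∑_{p-1 ≥ n₁ ≥ n₂ ≥ n₃ ≥ 1} (-1)^{n₁+n₂+n₃}/(n₁n₂n₃)
  ≡ −(4/3)·q_p(2)³ − (1/6)·B_{p-3} (mod p)` in `ℤ_(p)`. -/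
theorem alt_triple_star_sum_congr (p : ℕ) (hp : p.Prime) (hp3 : 3 < p) :
    haveI : Fact p.Prime := ⟨hp⟩
    ‖(((∑ n₁ ∈ Finset.Icc 1 (p - 1), ∑ n₂ ∈ Finset.Icc 1 n₁, ∑ n₃ ∈ Finset.Icc 1 n₂,
          (-1 : ℚ) ^ (n₁ + n₂ + n₃) / (n₁ * n₂ * n₃))
        - (-(4 / 3) * ((2 ^ (p - 1) - 1 : ℚ) / p) ^ 3
            - 1 / 6 * bernoulli' (p - 3)) : ℚ) : ℚ_[p])‖
      ≤ (p : ℝ) ^ (-1 : ℤ) := by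
  haveI : Fact p.Prime := ⟨hp⟩
  have hp5 : 5 ≤ p := by
    by_contra h
    push_neg at h
    interval_cases p
    exact absurd hp (by decide)
  have hodd : p % 2 = 1 := by
    rcases Nat.mod_two_eq_zero_or_one p with h | h
    · exfalso
      have : p = 2 := (Nat.Prime.even_iff hp).1 (Nat.even_iff.2 h)
      omega
    · exact h
  have hbb : (bernoulli' (p-3) : ℚ) = bernoulli (p-3) :=
    (bernoulli_eq_bernoulli'_of_ne_one (by omega)).symm
  rw [hbb]
  have htriple : (∑ n₁ ∈ Finset.Icc 1 (p - 1), ∑ n₂ ∈ Finset.Icc 1 n₁, ∑ n₃ ∈ Finset.Icc 1 n₂,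
      (-1 : ℚ) ^ (n₁ + n₂ + n₃) / (n₁ * n₂ * n₃))
      = ∑ n₁ ∈ Icc 1 (p-1), ∑ n₂ ∈ Icc 1 n₁, ∑ n₃ ∈ Icc 1 n₂,
        (((-1:ℚ))^n₁/(n₁:ℚ)) * (((-1:ℚ))^n₂/(n₂:ℚ)) * (((-1:ℚ))^n₃/(n₃:ℚ)) := by
    refine Finset.sum_congr rfl fun n₁ _ => Finset.sum_congr rfl fun n₂ _ =>
      Finset.sum_congr rfl fun n₃ _ => ?_
    rw [div_mul_div_comm, div_mul_div_comm, ← pow_add, ← pow_add]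
  rw [htriple]
  have hstar : 6 * (∑ n₁ ∈ Icc 1 (p-1), ∑ n₂ ∈ Icc 1 n₁, ∑ n₃ ∈ Icc 1 n₂,
        (((-1:ℚ))^n₁/(n₁:ℚ)) * (((-1:ℚ))^n₂/(n₂:ℚ)) * (((-1:ℚ))^n₃/(n₃:ℚ)))
      = (∑ n ∈ Icc 1 (p-1), ((-1:ℚ))^n/(n:ℚ))^3
        + 3 * (∑ n ∈ Icc 1 (p-1), ((-1:ℚ))^n/(n:ℚ))
            * (∑ n ∈ Icc 1 (p-1), (((-1:ℚ))^n/(n:ℚ))^2)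
        + 2 * ∑ n ∈ Icc 1 (p-1), (((-1:ℚ))^n/(n:ℚ))^3 := star3 _ _
  have hsqone : ∀ n : ℕ, (((-1:ℚ))^n)^2 = 1 := fun n => by
    rw [← pow_mul, mul_comm, pow_mul]; norm_num
  have hsq : (∑ n ∈ Icc 1 (p-1), (((-1:ℚ))^n/(n:ℚ))^2) = ∑ n ∈ Icc 1 (p-1), 1/(n:ℚ)^2 :=
    Finset.sum_congr rfl fun n _ => by rw [div_pow, hsqone n]
  have hcube : (∑ n ∈ Icc 1 (p-1), (((-1:ℚ))^n/(n:ℚ))^3)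
      = ∑ n ∈ Icc 1 (p-1), ((-1:ℚ))^n/(n:ℚ)^3 :=
    Finset.sum_congr rfl fun n _ => by
      rw [div_pow, pow_succ, hsqone n, one_mul]
  rw [hsq, hcube] at hstar
  -- split lemmas
  have h2M : 2 * ((p-1)/2) = p - 1 := by omega
  have hs1 := split 1 ((p-1)/2)
  rw [h2M] at hs1
  simp only [pow_one] at hs1
  have hrhs1 : 2 * (∑ k ∈ Icc 1 ((p-1)/2), 1/((2*k : ℕ):ℚ))
      = ∑ k ∈ Icc 1 ((p-1)/2), 1/(k:ℚ)^1 := by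
    rw [Finset.mul_sum]
    refine Finset.sum_congr rfl fun k hk => ?_
    have hk1 := (Finset.mem_Icc.1 hk).1
    have hkq : (k:ℚ) ≠ 0 := by
      simp only [ne_eq, Nat.cast_eq_zero]; omega
    push_cast
    rw [pow_one]
    field_simp
  rw [hrhs1] at hs1
  have hs3 := split 3 ((p-1)/2)
  rw [h2M] at hs3
  have hrhs3 : 2 * (∑ k ∈ Icc 1 ((p-1)/2), 1/((2*k : ℕ):ℚ)^3)
      = (1/4) * ∑ k ∈ Icc 1 ((p-1)/2), 1/(k:ℚ)^3 := by
    rw [Finset.mul_sum, Finset.mul_sum]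
    refine Finset.sum_congr rfl fun k hk => ?_
    have hk1 := (Finset.mem_Icc.1 hk).1
    have hkq : (k:ℚ) ≠ 0 := by
      simp only [ne_eq, Nat.cast_eq_zero]; omega
    push_cast
    field_simp
    ring
  rw [hrhs3] at hs3
  -- the grand rational identity
  have hrat : (∑ n₁ ∈ Icc 1 (p-1), ∑ n₂ ∈ Icc 1 n₁, ∑ n₃ ∈ Icc 1 n₂,
        (((-1:ℚ))^n₁/(n₁:ℚ)) * (((-1:ℚ))^n₂/(n₂:ℚ)) * (((-1:ℚ))^n₃/(n₃:ℚ)))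
        - (-(4 / 3) * ((2 ^ (p - 1) - 1 : ℚ) / p) ^ 3 - 1 / 6 * bernoulli (p - 3))
      = (1/6) * (
          ((∑ k ∈ Icc 1 ((p-1)/2), 1/(k:ℚ)^1) + 2 * ((2 ^ (p - 1) - 1 : ℚ) / p)
              - ∑ n ∈ Icc 1 (p-1), 1/(n:ℚ)^1)
            * ((∑ n ∈ Icc 1 (p-1), ((-1:ℚ))^n/(n:ℚ))^2
                - 2 * ((2 ^ (p - 1) - 1 : ℚ) / p) * (∑ n ∈ Icc 1 (p-1), ((-1:ℚ))^n/(n:ℚ))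
                + 4 * ((2 ^ (p - 1) - 1 : ℚ) / p)^2)
          + 3 * (∑ n ∈ Icc 1 (p-1), ((-1:ℚ))^n/(n:ℚ)) * (∑ n ∈ Icc 1 (p-1), 1/(n:ℚ)^2)
          + ((1/2) * ((∑ k ∈ Icc 1 ((p-1)/2), 1/(k:ℚ)^3) + 2 * bernoulli (p-3))
              - 2 * ∑ n ∈ Icc 1 (p-1), 1/(n:ℚ)^3)) := by
    have hs1' : (∑ n ∈ Icc 1 (p-1), ((-1:ℚ))^n/(n:ℚ))
        + (∑ n ∈ Icc 1 (p-1), 1/(n:ℚ)^1) = ∑ k ∈ Icc 1 ((p-1)/2), 1/(k:ℚ)^1 := by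
      have : (∑ n ∈ Icc 1 (p-1), 1/(n:ℚ)) = ∑ n ∈ Icc 1 (p-1), 1/(n:ℚ)^1 := by
        simp only [pow_one]
      rw [← this]
      exact hs1
    linear_combination (1/6:ℚ) * hstar
      + ((1/6) * ((∑ n ∈ Icc 1 (p-1), ((-1:ℚ))^n/(n:ℚ))^2
          - 2 * ((2 ^ (p - 1) - 1 : ℚ) / p) * (∑ n ∈ Icc 1 (p-1), ((-1:ℚ))^n/(n:ℚ))
          + 4 * ((2 ^ (p - 1) - 1 : ℚ) / p)^2)) * hs1'
      + (1/3:ℚ) * hs3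
  rw [hrat]
  -- move to ℚ_p
  have hcast : ((((1/6) * (
          ((∑ k ∈ Icc 1 ((p-1)/2), 1/(k:ℚ)^1) + 2 * ((2 ^ (p - 1) - 1 : ℚ) / p)
              - ∑ n ∈ Icc 1 (p-1), 1/(n:ℚ)^1)
            * ((∑ n ∈ Icc 1 (p-1), ((-1:ℚ))^n/(n:ℚ))^2
                - 2 * ((2 ^ (p - 1) - 1 : ℚ) / p) * (∑ n ∈ Icc 1 (p-1), ((-1:ℚ))^n/(n:ℚ))
                + 4 * ((2 ^ (p - 1) - 1 : ℚ) / p)^2)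
          + 3 * (∑ n ∈ Icc 1 (p-1), ((-1:ℚ))^n/(n:ℚ)) * (∑ n ∈ Icc 1 (p-1), 1/(n:ℚ)^2)
          + ((1/2) * ((∑ k ∈ Icc 1 ((p-1)/2), 1/(k:ℚ)^3) + 2 * bernoulli (p-3))
              - 2 * ∑ n ∈ Icc 1 (p-1), 1/(n:ℚ)^3)) : ℚ)) : ℚ_[p])
      = (1/6 : ℚ_[p]) * (
          (((((∑ k ∈ Icc 1 ((p-1)/2), 1/(k:ℚ)^1 : ℚ)) : ℚ_[p])
              + 2 * ((((2^(p-1) - 1 : ℚ)/(p:ℚ) : ℚ)) : ℚ_[p]))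
              - (((∑ n ∈ Icc 1 (p-1), 1/(n:ℚ)^1 : ℚ)) : ℚ_[p]))
            * ((((∑ n ∈ Icc 1 (p-1), ((-1:ℚ))^n/(n:ℚ) : ℚ)) : ℚ_[p])^2
                - 2 * ((((2^(p-1) - 1 : ℚ)/(p:ℚ) : ℚ)) : ℚ_[p])
                    * (((∑ n ∈ Icc 1 (p-1), ((-1:ℚ))^n/(n:ℚ) : ℚ)) : ℚ_[p])
                + 4 * ((((2^(p-1) - 1 : ℚ)/(p:ℚ) : ℚ)) : ℚ_[p])^2)
          + 3 * (((∑ n ∈ Icc 1 (p-1), ((-1:ℚ))^n/(n:ℚ) : ℚ)) : ℚ_[p])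
              * (((∑ n ∈ Icc 1 (p-1), 1/(n:ℚ)^2 : ℚ)) : ℚ_[p])
          + ((1/2 : ℚ_[p]) * ((((∑ k ∈ Icc 1 ((p-1)/2), 1/(k:ℚ)^3 : ℚ)) : ℚ_[p])
                + 2 * ((bernoulli (p-3) : ℚ) : ℚ_[p]))
              - 2 * (((∑ n ∈ Icc 1 (p-1), 1/(n:ℚ)^3 : ℚ)) : ℚ_[p]))) := by
    push_cast
    ring
  rw [hcast]
  rw [show ((p:ℝ))^(-1:ℤ) = ((p:ℝ))⁻¹ from zpow_neg_one _]
  rw [norm_mul]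
  have h6 : ‖((1:ℚ_[p])/6)‖ = 1 := by
    have h6d : ¬ p ∣ 6 := by
      intro h
      have := Nat.le_of_dvd (by norm_num) h
      interval_cases p
      · exact absurd h (by decide)
      · exact absurd hp (by decide)
    have := nat_unit_norm (p := p) (n := 6) h6d
    rw [norm_div, norm_one]
    push_cast at this
    rw [this]
    norm_num
  rw [show (1/6 : ℚ_[p]) = ((1:ℚ_[p])/6) from by norm_num, h6, one_mul]
  -- bound the three pieces
  have h2le : ‖((2:ℚ_[p]))‖ ≤ 1 := by
    have := norm_nat_le_one (p := p) 2
    push_cast at this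
    exact this
  have h3le : ‖((3:ℚ_[p]))‖ ≤ 1 := by
    have := norm_nat_le_one (p := p) 3
    push_cast at this
    exact this
  have h4le : ‖((4:ℚ_[p]))‖ ≤ 1 := by
    have := norm_nat_le_one (p := p) 4
    push_cast at this
    exact this
  have hP1 : ‖((∑ n ∈ Icc 1 (p-1), ((-1:ℚ))^n/(n:ℚ) : ℚ) : ℚ_[p])‖ ≤ 1 := P1_norm_le
  have hq1 : ‖((((2^(p-1) - 1 : ℚ)/(p:ℚ) : ℚ)) : ℚ_[p])‖ ≤ 1 := qq_norm hodd
  have hmul11 : ∀ x y : ℚ_[p], ‖x‖ ≤ 1 → ‖y‖ ≤ 1 → ‖x * y‖ ≤ 1 := by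
    intro x y hx hy
    rw [norm_mul]
    calc ‖x‖ * ‖y‖ ≤ 1 * 1 := mul_le_mul hx hy (norm_nonneg _) zero_le_one
      _ = 1 := one_mul 1
  have hmul1p : ∀ x y : ℚ_[p], ‖x‖ ≤ 1 → ‖y‖ ≤ (p:ℝ)⁻¹ → ‖x * y‖ ≤ (p:ℝ)⁻¹ := by
    intro x y hx hy
    rw [norm_mul]
    calc ‖x‖ * ‖y‖ ≤ 1 * (p:ℝ)⁻¹ := mul_le_mul hx hy (norm_nonneg _) zero_le_one
      _ = (p:ℝ)⁻¹ := one_mul _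
  refine nadd (nadd ?_ ?_) ?_
  · -- first piece
    rw [mul_comm]
    refine hmul1p _ _ ?_ ?_
    · refine nadd (nsub ?_ ?_) ?_
      · rw [norm_pow]
        exact pow_le_one₀ (norm_nonneg _) hP1
      · exact hmul11 _ _ (hmul11 _ _ h2le hq1) hP1
      · rw [show (4 : ℚ_[p]) * ((((2^(p-1) - 1 : ℚ)/(p:ℚ) : ℚ)) : ℚ_[p])^2
            = 4 * ((((2^(p-1) - 1 : ℚ)/(p:ℚ) : ℚ)) : ℚ_[p]) * ((((2^(p-1) - 1 : ℚ)/(p:ℚ) : ℚ)) : ℚ_[p]) from by ring]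
        exact hmul11 _ _ (hmul11 _ _ h4le hq1) hq1
    · refine nsub ?_ (Hr_norm 1 (by omega) (by omega))
      exact T1_cong hp5 hodd
  · -- second piece
    rw [mul_assoc]
    refine hmul1p _ _ h3le (hmul1p _ _ hP1 (Hr_norm 2 (by omega) (by omega)))
  · -- third piece
    refine nsub ?_ ?_
    · refine hmul1p _ _ ?_ (T3_cong hp5 hodd)
      rw [show (1/2 : ℚ_[p]) = ((1:ℚ_[p])/2) from by norm_num, norm_div, norm_one]
      have := nat_unit_norm (p := p) (n := 2) (not_dvd_two hodd)
      push_cast at this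
      rw [this]
      norm_num
    · exact hmul1p _ _ h2le (Hr_norm 3 (by omega) (by omega))
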